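/- (Case A is impossible.) Let m, n₀, n₁ be positive integers with m ≥ 4 and gcd(n₀, n₁) = 1. Then there is no integer polynomial solution x, y, z of equation (2) in which all three polynomials x, y, z have degree 1. -/

import Mathlib

open Polynomial

/-- `x, y, z ∈ ℤ[λ]` form an integer polynomial solution of equation (2). -/
def IsIntPolySolution (m n₀ n₁ : ℤ) (x y z : Polynomial ℤ) : Prop :=
  (∀ t : ℕ, 0 < x.eval (t : ℤ)) ∧ (∀ t : ℕ, 0 < y.eval (t : ℤ)) ∧
  (∀ t : ℕ, 0 < z.eval (t : ℤ)) ∧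
  C m * (x * y * z) = (C n₀ + C n₁ * X) * (x * y + x * z + y * z)

private lemma nP_ne_zero {n₀ n₁ : ℤ} (hn₀ : 0 < n₀) :
    (C n₀ + C n₁ * X : Polynomial ℤ) ≠ 0 := fun h => by
  have h2 := congrArg (Polynomial.eval 0) h
  simp at h2
  omega

private lemma aeval_nP {n₀ n₁ : ℤ} (hn₁ : 0 < n₁) :
    aeval (-(n₀ : ℚ)/(n₁ : ℚ)) (C n₀ + C n₁ * X : Polynomial ℤ) = 0 := by
  have h1 : (n₁ : ℚ) ≠ 0 := Int.cast_ne_zero.mpr hn₁.ne'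
  simp only [map_add, map_mul, aeval_C, aeval_X]
  field_simp
  simp only [algebraMap_int_eq, eq_intCast]; ring

/-- A positive degree-one integer polynomial vanishing at `-n₀/n₁` is a positive
integer multiple of `n₀ + n₁ X`. -/
private lemma repA {n₀ n₁ : ℤ} (hn₀ : 0 < n₀) (hn₁ : 0 < n₁)
    (hcop : Int.gcd n₀ n₁ = 1) {p : Polynomial ℤ} (hd : p.natDegree = 1)
    (hp : ∀ t : ℕ, 0 < p.eval (t : ℤ))
    (h0 : aeval (-(n₀ : ℚ)/(n₁ : ℚ)) p = 0) :
    ∃ c : ℤ, 1 ≤ c ∧ p = C c * (C n₀ + C n₁ * X) := by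
  have hrep := p.eq_X_add_C_of_natDegree_le_one hd.le
  set a₁ := p.coeff 1 with ha₁
  set a₀ := p.coeff 0 with ha₀
  have hQ : (n₁ : ℚ) ≠ 0 := Int.cast_ne_zero.mpr hn₁.ne'
  -- the relation from vanishing
  have h0' : (a₁ : ℚ) * (-(n₀ : ℚ)/(n₁ : ℚ)) + a₀ = 0 := by
    rw [hrep] at h0
    simpa only [map_add, map_mul, aeval_C, aeval_X, algebraMap_int_eq, eq_intCast, map_intCast] using h0
  have hQrel : (a₁ : ℚ) * n₀ = a₀ * n₁ := by field_simp at h0'; linarith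
  have hrel : a₁ * n₀ = a₀ * n₁ := by exact_mod_cast hQrel
  -- leading coefficient is positive
  have ha₁ne : a₁ ≠ 0 := by
    have := p.coeff_ne_zero_of_eq_degree (n := 1) ?_
    · exact this
    · rw [degree_eq_natDegree (fun hh => by simp [hh] at hd), hd]
  have ha₁pos : 1 ≤ a₁ := by
    by_contra hcon
    push_neg at hcon
    have ha₁neg : a₁ ≤ -1 := by omega
    have hev := hp (a₀.natAbs)
    rw [hrep] at hev
    simp only [eval_add, eval_mul, eval_C, eval_X] at hev
    have h1 : (0 : ℤ) ≤ (a₀.natAbs : ℤ) := Int.natCast_nonneg _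
    have h2 : a₀ ≤ (a₀.natAbs : ℤ) := Int.le_natAbs
    nlinarith
  -- n₁ divides a₁
  have hco : IsCoprime (n₁ : ℤ) n₀ := by
    rw [Int.isCoprime_iff_gcd_eq_one, Int.gcd_comm]; exact hcop
  have hdvd : n₁ ∣ a₁ := hco.dvd_of_dvd_mul_right ⟨a₀, by linarith [hrel]⟩
  obtain ⟨c, hc⟩ := hdvd
  have hcpos : 1 ≤ c := by nlinarith
  refine ⟨c, hcpos, ?_⟩
  have ha₀ : a₀ = c * n₀ := by
    have : a₀ * n₁ = (c * n₀) * n₁ := by rw [← hrel, hc]; ring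
    exact mul_right_cancel₀ hn₁.ne' this
  rw [hrep, hc, ha₀, C_mul, C_mul]
  ring

private lemma cde_contra {m c d e : ℤ} (hm : 4 ≤ m) (hc : 1 ≤ c) (hd : 1 ≤ d)
    (he : 1 ≤ e) (h : m * (c * d * e) = c * d + c * e + d * e) : False := by
  have hcd : 0 < c * d := mul_pos (by omega) (by omega)
  have hce : 0 < c * e := mul_pos (by omega) (by omega)
  have hde : 0 < d * e := mul_pos (by omega) (by omega)
  have hcde : 0 < c * d * e := mul_pos hcd (by omega)
  linarith [le_mul_of_one_le_right hcd.le he, le_mul_of_one_le_right hce.le hd,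
    le_mul_of_one_le_right hde.le hc, mul_le_mul_of_nonneg_right hm hcde.le]

/-- Case with two of the polynomials known to vanish at the root. -/
private lemma aux2 {m n₀ n₁ : ℤ} (hm : 4 ≤ m) (hn₀ : 0 < n₀) (hn₁ : 0 < n₁)
    (hcop : Int.gcd n₀ n₁ = 1) {x y z : Polynomial ℤ}
    (hz : ∀ t : ℕ, 0 < z.eval (t : ℤ)) (hdz : z.natDegree = 1)
    (heq : C m * (x * y * z) = (C n₀ + C n₁ * X) * (x * y + x * z + y * z))
    (h0x : aeval (-(n₀ : ℚ)/(n₁ : ℚ)) x = 0)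
    (h0y : aeval (-(n₀ : ℚ)/(n₁ : ℚ)) y = 0)
    (hx : ∀ t : ℕ, 0 < x.eval (t : ℤ)) (hdx : x.natDegree = 1)
    (hy : ∀ t : ℕ, 0 < y.eval (t : ℤ)) (hdy : y.natDegree = 1) : False := by
  set nP : Polynomial ℤ := C n₀ + C n₁ * X with hnP
  obtain ⟨c, hc1, hcx⟩ := repA hn₀ hn₁ hcop hdx hx h0x
  obtain ⟨d, hd1, hdy'⟩ := repA hn₀ hn₁ hcop hdy hy h0y
  -- cancel nP^2 from the identity
  have hcancel : C (m * c * d) * z = C (c * d) * nP + C (c + d) * z := by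
    have h2 : nP ^ 2 * (C (m * c * d) * z) =
        nP ^ 2 * (C (c * d) * nP + C (c + d) * z) := by
      have := heq
      rw [hcx, hdy'] at this
      simp only [map_mul, map_add]
      linear_combination this
    exact mul_left_cancel₀ (pow_ne_zero 2 (nP_ne_zero hn₀)) h2
  -- evaluate at the root
  have hZ : aeval (-(n₀ : ℚ)/(n₁ : ℚ)) z = 0 := by
    have h3 := congrArg (aeval (-(n₀ : ℚ)/(n₁ : ℚ))) hcancel
    simp only [map_mul, map_add, aeval_C, map_intCast, algebraMap_int_eq, eq_intCast] at h3
    rw [aeval_nP hn₁] at h3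
    push_cast at h3
    have hpos : (0 : ℚ) < (m : ℚ) * c * d - (c + d) := by
      have : c + d ≤ 2 * (c * d) := by nlinarith
      have h4 : (4 : ℤ) * (c * d) ≤ m * c * d := by nlinarith
      have : c + d < m * c * d := by nlinarith
      exact_mod_cast sub_pos.mpr (by exact_mod_cast this : ((c : ℚ) + d) < (m : ℚ) * c * d)
    have h5 : ((m : ℚ) * c * d - (c + d)) * aeval (-(n₀ : ℚ)/(n₁ : ℚ)) z = 0 := by
      linear_combination h3
    rcases mul_eq_zero.mp h5 with h | h
    · exact absurd h hpos.ne'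
    · exact h
  obtain ⟨e, he1, hez⟩ := repA hn₀ hn₁ hcop hdz hz hZ
  -- final identity
  have hfin : m * (c * d * e) = c * d + c * e + d * e := by
    have h6 : nP ^ 3 * C (m * (c * d * e)) = nP ^ 3 * C (c * d + c * e + d * e) := by
      have := heq
      rw [hcx, hdy', hez] at this
      simp only [map_mul, map_add]
      linear_combination this
    have h7 := mul_left_cancel₀ (pow_ne_zero 3 (nP_ne_zero hn₀)) h6
    exact C_injective h7
  exact cde_contra hm hc1 hd1 he1 hfin

/-- Case with one of the polynomials known to vanish at the root. -/
private lemma aux1 {m n₀ n₁ : ℤ} (hm : 4 ≤ m) (hn₀ : 0 < n₀) (hn₁ : 0 < n₁)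
    (hcop : Int.gcd n₀ n₁ = 1) {x y z : Polynomial ℤ}
    (hx : ∀ t : ℕ, 0 < x.eval (t : ℤ)) (hdx : x.natDegree = 1)
    (hy : ∀ t : ℕ, 0 < y.eval (t : ℤ)) (hdy : y.natDegree = 1)
    (hz : ∀ t : ℕ, 0 < z.eval (t : ℤ)) (hdz : z.natDegree = 1)
    (heq : C m * (x * y * z) = (C n₀ + C n₁ * X) * (x * y + x * z + y * z))
    (h0x : aeval (-(n₀ : ℚ)/(n₁ : ℚ)) x = 0) : False := by
  set nP : Polynomial ℤ := C n₀ + C n₁ * X with hnP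
  obtain ⟨c, hc1, hcx⟩ := repA hn₀ hn₁ hcop hdx hx h0x
  have hcancel : C (m * c) * (y * z) = C c * nP * y + C c * nP * z + y * z := by
    have h2 : nP * (C (m * c) * (y * z)) =
        nP * (C c * nP * y + C c * nP * z + y * z) := by
      have := heq
      rw [hcx] at this
      simp only [map_mul]
      linear_combination this
    exact mul_left_cancel₀ (nP_ne_zero hn₀) h2
  have h3 := congrArg (aeval (-(n₀ : ℚ)/(n₁ : ℚ))) hcancel
  simp only [map_mul, map_add, aeval_C, map_intCast, algebraMap_int_eq, eq_intCast] at h3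
  rw [aeval_nP hn₁] at h3
  push_cast at h3
  have h5 : ((m : ℚ) * c - 1) *
      (aeval (-(n₀ : ℚ)/(n₁ : ℚ)) y * aeval (-(n₀ : ℚ)/(n₁ : ℚ)) z) = 0 := by
    linear_combination h3
  have hpos : (0 : ℚ) < (m : ℚ) * c - 1 := by
    have : (1 : ℤ) < m * c := by nlinarith
    have : (1 : ℚ) < (m : ℚ) * c := by exact_mod_cast this
    linarith
  rcases mul_eq_zero.mp h5 with h | h
  · exact absurd h hpos.ne'
  rcases mul_eq_zero.mp h with h0y | h0z
  · exact aux2 hm hn₀ hn₁ hcop hz hdz heq h0x h0y hx hdx hy hdy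
  · exact aux2 hm hn₀ hn₁ hcop hy hdy (by linear_combination heq) h0x h0z hx hdx hz hdz

/-- Case A is impossible: no integer polynomial solution of (2) has all three
polynomials of degree 1. -/
theorem caseA_impossible (m n₀ n₁ : ℤ) (hm : 4 ≤ m) (hn₀ : 0 < n₀) (hn₁ : 0 < n₁)
    (hcop : Int.gcd n₀ n₁ = 1) :
    ¬ ∃ x y z : Polynomial ℤ, IsIntPolySolution m n₀ n₁ x y z ∧
      x.natDegree = 1 ∧ y.natDegree = 1 ∧ z.natDegree = 1 := by
  rintro ⟨x, y, z, ⟨hx, hy, hz, heq⟩, hdx, hdy, hdz⟩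
  have h3 := congrArg (aeval (-(n₀ : ℚ)/(n₁ : ℚ))) heq
  simp only [map_mul, map_add, aeval_C, aeval_X, map_intCast, algebraMap_int_eq, eq_intCast] at h3
  have hroot : (n₀ : ℚ) + (n₁ : ℚ) * (-(n₀ : ℚ)/(n₁ : ℚ)) = 0 := by
    have h1 : (n₁ : ℚ) ≠ 0 := Int.cast_ne_zero.mpr hn₁.ne'
    field_simp
    ring
  rw [hroot, zero_mul] at h3
  have hmQ : (m : ℚ) ≠ 0 := Int.cast_ne_zero.mpr (by omega)
  have hprod : aeval (-(n₀ : ℚ)/(n₁ : ℚ)) x * aeval (-(n₀ : ℚ)/(n₁ : ℚ)) y *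
      aeval (-(n₀ : ℚ)/(n₁ : ℚ)) z = 0 := by
    rcases mul_eq_zero.mp h3 with h | h
    · exact absurd h hmQ
    · exact h
  rcases mul_eq_zero.mp hprod with h | h0z
  · rcases mul_eq_zero.mp h with h0x | h0y
    · exact aux1 hm hn₀ hn₁ hcop hx hdx hy hdy hz hdz heq h0x
    · exact aux1 hm hn₀ hn₁ hcop hy hdy hx hdx hz hdz (by linear_combination heq) h0y
  · exact aux1 hm hn₀ hn₁ hcop hz hdz hx hdx hy hdy (by linear_combination heq) h0z
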